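/- arXiv:2402.00400 — 2 statements merged into one kernel-verified Lean document; each statement's English description precedes it below -/
import Mathlib

section
/- Let M be a product of finitely many matrices, each equal to L = [[1,1],[0,1]] or R = [[1,0],[1,1]], in which both L and R occur at least once. Then the trace of M is strictly greater than 2. Hence M represents a hyperbolic element of PSL(2,ℤ). -/
open Matrix

lemma LR_word_entries
    (L R : Matrix.SpecialLinearGroup (Fin 2) ℤ)
    (hL : (L : Matrix (Fin 2) (Fin 2) ℤ) = !![1, 1; 0, 1])
    (hR : (R : Matrix (Fin 2) (Fin 2) ℤ) = !![1, 0; 1, 1]) :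
    ∀ l : List (Matrix.SpecialLinearGroup (Fin 2) ℤ), (∀ x ∈ l, x = L ∨ x = R) →
      1 ≤ (l.prod : Matrix (Fin 2) (Fin 2) ℤ) 0 0 ∧
      1 ≤ (l.prod : Matrix (Fin 2) (Fin 2) ℤ) 1 1 ∧
      0 ≤ (l.prod : Matrix (Fin 2) (Fin 2) ℤ) 0 1 ∧
      0 ≤ (l.prod : Matrix (Fin 2) (Fin 2) ℤ) 1 0 ∧
      (L ∈ l → 1 ≤ (l.prod : Matrix (Fin 2) (Fin 2) ℤ) 0 1) ∧
      (R ∈ l → 1 ≤ (l.prod : Matrix (Fin 2) (Fin 2) ℤ) 1 0) := by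
  intro l
  induction l with
  | nil =>
    intro _
    simp
  | cons x t ih =>
    intro h
    obtain ⟨ha, hd, hb, hc, hLt, hRt⟩ := ih (fun y hy => h y (List.mem_cons_of_mem x hy))
    have hx := h x List.mem_cons_self
    have hprod : ((x :: t).prod : Matrix (Fin 2) (Fin 2) ℤ) =
        (x : Matrix (Fin 2) (Fin 2) ℤ) * (t.prod : Matrix (Fin 2) (Fin 2) ℤ) := by
      simp [List.prod_cons]
    rcases hx with rfl | rfl
    · -- x = L
      have e : ((x :: t).prod : Matrix (Fin 2) (Fin 2) ℤ) =
          !![1, 1; 0, 1] * (t.prod : Matrix (Fin 2) (Fin 2) ℤ) := by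
        rw [hprod, hL]
      refine ⟨?_, ?_, ?_, ?_, ?_, ?_⟩
      · rw [e]; simp [Matrix.mul_apply, Fin.sum_univ_two]; linarith
      · rw [e]; simp [Matrix.mul_apply, Fin.sum_univ_two]; linarith
      · rw [e]; simp [Matrix.mul_apply, Fin.sum_univ_two]; linarith
      · rw [e]; simp [Matrix.mul_apply, Fin.sum_univ_two]; linarith
      · intro _; rw [e]; simp [Matrix.mul_apply, Fin.sum_univ_two]; linarith
      · intro hR'
        have hRt' : R ∈ t := by
          rcases List.mem_cons.mp hR' with heq | hmem
          · exfalso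
            have : (!![1, 1; 0, 1] : Matrix (Fin 2) (Fin 2) ℤ) = !![1, 0; 1, 1] := by
              rw [← hL, ← hR, heq]
            have := congrFun (congrFun this 0) 1
            simp at this
          · exact hmem
        rw [e]; simp [Matrix.mul_apply, Fin.sum_univ_two]
        exact hRt hRt'
    · -- x = R
      have e : ((x :: t).prod : Matrix (Fin 2) (Fin 2) ℤ) =
          !![1, 0; 1, 1] * (t.prod : Matrix (Fin 2) (Fin 2) ℤ) := by
        rw [hprod, hR]
      refine ⟨?_, ?_, ?_, ?_, ?_, ?_⟩
      · rw [e]; simp [Matrix.mul_apply, Fin.sum_univ_two]; linarith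
      · rw [e]; simp [Matrix.mul_apply, Fin.sum_univ_two]; linarith
      · rw [e]; simp [Matrix.mul_apply, Fin.sum_univ_two]; linarith
      · rw [e]; simp [Matrix.mul_apply, Fin.sum_univ_two]; linarith
      · intro hL'
        have hLt' : L ∈ t := by
          rcases List.mem_cons.mp hL' with heq | hmem
          · exfalso
            have : (!![1, 1; 0, 1] : Matrix (Fin 2) (Fin 2) ℤ) = !![1, 0; 1, 1] := by
              rw [← hL, ← hR, heq]
            have := congrFun (congrFun this 0) 1
            simp at this
          · exact hmem
        rw [e]; simp [Matrix.mul_apply, Fin.sum_univ_two]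
        exact hLt hLt'
      · intro _; rw [e]; simp [Matrix.mul_apply, Fin.sum_univ_two]; linarith

/-- A finite product of matrices from {L, R} in which both L and R occur has trace
strictly greater than 2; hence it represents a hyperbolic element of PSL(2,ℤ)
(the absolute value of its trace exceeds 2). -/
theorem trace_gt_two_of_LR_word
    (L R : Matrix.SpecialLinearGroup (Fin 2) ℤ)
    (hL : (L : Matrix (Fin 2) (Fin 2) ℤ) = !![1, 1; 0, 1])
    (hR : (R : Matrix (Fin 2) (Fin 2) ℤ) = !![1, 0; 1, 1])
    (l : List (Matrix.SpecialLinearGroup (Fin 2) ℤ))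
    (hmem : ∀ x ∈ l, x = L ∨ x = R)
    (hLmem : L ∈ l) (hRmem : R ∈ l)
    (M : Matrix.SpecialLinearGroup (Fin 2) ℤ) (hM : M = l.prod) :
    2 < Matrix.trace ((M : Matrix (Fin 2) (Fin 2) ℤ)) ∧
    2 < |Matrix.trace ((M : Matrix (Fin 2) (Fin 2) ℤ))| := by
  obtain ⟨ha, hd, hb, hc, hLe, hRe⟩ := LR_word_entries L R hL hR l hmem
  subst hM
  have hdet : ((l.prod : Matrix (Fin 2) (Fin 2) ℤ)).det = 1 := l.prod.property
  rw [Matrix.det_fin_two] at hdet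
  have hb1 := hLe hLmem
  have hc1 := hRe hRmem
  set N := (l.prod : Matrix (Fin 2) (Fin 2) ℤ)
  have had : 2 ≤ N 0 0 * N 1 1 := by nlinarith
  have htr : 2 < N 0 0 + N 1 1 := by
    rcases le_or_gt 2 (N 0 0) with h | h
    · linarith
    · have : N 0 0 = 1 := by omega
      nlinarith
  rw [Matrix.trace_fin_two]
  constructor
  · exact htr
  · rw [abs_of_pos (by linarith)]; exact htr
end

section
/- The matrices L = [[1,1],[0,1]] and R = [[1,0],[1,1]] generate a free monoid inside SL(2,ℤ): if two finite sequences of letters from {L, R} yield the same matrix product, then the sequences are equal. -/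
open Matrix

lemma LR_entries (L R : Matrix.SpecialLinearGroup (Fin 2) ℤ)
    (hL : (L : Matrix (Fin 2) (Fin 2) ℤ) = !![1, 1; 0, 1])
    (hR : (R : Matrix (Fin 2) (Fin 2) ℤ) = !![1, 0; 1, 1])
    (f : Bool → Matrix.SpecialLinearGroup (Fin 2) ℤ)
    (hf : f true = L ∧ f false = R) :
    ∀ l : List Bool,
      1 ≤ ((l.map f).prod : Matrix (Fin 2) (Fin 2) ℤ) 0 0 ∧
      0 ≤ ((l.map f).prod : Matrix (Fin 2) (Fin 2) ℤ) 0 1 ∧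
      0 ≤ ((l.map f).prod : Matrix (Fin 2) (Fin 2) ℤ) 1 0 ∧
      1 ≤ ((l.map f).prod : Matrix (Fin 2) (Fin 2) ℤ) 1 1 := by
  intro l
  induction l with
  | nil => simp [Matrix.one_apply]
  | cons b t ih =>
    obtain ⟨h1, h2, h3, h4⟩ := ih
    cases b <;>
      simp only [List.map_cons, List.prod_cons, Matrix.SpecialLinearGroup.coe_mul,
        hf.1, hf.2, hL, hR] <;>
      simp [Matrix.mul_apply, Fin.sum_univ_two] <;>
      refine ⟨by linarith, by linarith, by linarith, by linarith⟩

/-- L and R generate a free monoid inside SL(2,ℤ): if two finite sequences of letters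
from {L, R} (encoded by booleans: `true ↦ L`, `false ↦ R`) yield the same matrix
product, then the sequences are equal. -/
theorem LR_free_monoid
    (L R : Matrix.SpecialLinearGroup (Fin 2) ℤ)
    (hL : (L : Matrix (Fin 2) (Fin 2) ℤ) = !![1, 1; 0, 1])
    (hR : (R : Matrix (Fin 2) (Fin 2) ℤ) = !![1, 0; 1, 1])
    (f : Bool → Matrix.SpecialLinearGroup (Fin 2) ℤ)
    (hf : f true = L ∧ f false = R) :
    ∀ l₁ l₂ : List Bool, (l₁.map f).prod = (l₂.map f).prod → l₁ = l₂ := by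
  have key := LR_entries L R hL hR f hf
  intro l₁
  induction l₁ with
  | nil =>
    intro l₂ h
    cases l₂ with
    | nil => rfl
    | cons b t =>
      exfalso
      obtain ⟨h1, h2, h3, h4⟩ := key t
      have hmat := congrArg (fun M : Matrix.SpecialLinearGroup (Fin 2) ℤ =>
        (M : Matrix (Fin 2) (Fin 2) ℤ)) h
      cases b <;>
        simp only [List.map_nil, List.prod_nil, List.map_cons, List.prod_cons,
          Matrix.SpecialLinearGroup.coe_mul, Matrix.SpecialLinearGroup.coe_one,
          hf.1, hf.2, hL, hR] at hmat
      · have e := congrFun (congrFun hmat 1) 0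
        simp [Matrix.mul_apply, Fin.sum_univ_two, Matrix.one_apply] at e
        linarith
      · have e := congrFun (congrFun hmat 0) 1
        simp [Matrix.mul_apply, Fin.sum_univ_two, Matrix.one_apply] at e
        linarith
  | cons a t₁ ih =>
    intro l₂ h
    cases l₂ with
    | nil =>
      exfalso
      obtain ⟨h1, h2, h3, h4⟩ := key t₁
      have hmat := congrArg (fun M : Matrix.SpecialLinearGroup (Fin 2) ℤ =>
        (M : Matrix (Fin 2) (Fin 2) ℤ)) h
      cases a <;>
        simp only [List.map_nil, List.prod_nil, List.map_cons, List.prod_cons,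
          Matrix.SpecialLinearGroup.coe_mul, Matrix.SpecialLinearGroup.coe_one,
          hf.1, hf.2, hL, hR] at hmat
      · have e := congrFun (congrFun hmat 1) 0
        simp [Matrix.mul_apply, Fin.sum_univ_two, Matrix.one_apply] at e
        linarith
      · have e := congrFun (congrFun hmat 0) 1
        simp [Matrix.mul_apply, Fin.sum_univ_two, Matrix.one_apply] at e
        linarith
    | cons b t₂ =>
      simp only [List.map_cons, List.prod_cons] at h
      by_cases hab : a = b
      · subst hab
        rw [ih t₂ (mul_left_cancel h)]
      · exfalso
        obtain ⟨p1, p2, p3, p4⟩ := key t₁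
        obtain ⟨q1, q2, q3, q4⟩ := key t₂
        have hmat := congrArg (fun M : Matrix.SpecialLinearGroup (Fin 2) ℤ =>
          (M : Matrix (Fin 2) (Fin 2) ℤ)) h
        simp only [Matrix.SpecialLinearGroup.coe_mul] at hmat
        cases a <;> cases b
        · exact hab rfl
        · -- a = false (R), b = true (L)
          rw [hf.1, hf.2, hL, hR] at hmat
          have e00 := congrFun (congrFun hmat 0) 0
          have e10 := congrFun (congrFun hmat 1) 0
          simp [Matrix.mul_apply, Fin.sum_univ_two] at e00 e10
          linarith
        · -- a = true (L), b = false (R)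
          rw [hf.1, hf.2, hL, hR] at hmat
          have e00 := congrFun (congrFun hmat 0) 0
          have e10 := congrFun (congrFun hmat 1) 0
          simp [Matrix.mul_apply, Fin.sum_univ_two] at e00 e10
          linarith
        · exact hab rfl
end
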